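/- Let (A x ≤ b) ∪ (l ≤ D x ≤ u) be a split system with A ∈ ℚ^{m₁×n} and D ∈ ℚ^{m₂×n}. Let s ∈ ℚ^n be a rational solution of the bounded part D x ≤ u, and set g = D s ∈ ℚ^{m₂}. Then the combined system (A x ≤ b) ∪ (D x = g) has a rational solution, i.e., there exists s' ∈ ℚ^n with A s' ≤ b and D s' = g. -/

import Mathlib

open Matrix Finset

lemma sum_dite_zero {ι : Type} [Fintype ι] (P : ι → Prop) [DecidablePred P]
    (g : {i // P i} → ℚ) :
    ∑ i : ι, (if h : P i then g ⟨i, h⟩ else 0) = ∑ i : {i // P i}, g i := by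
  rw [← Fintype.sum_subtype_add_sum_subtype P (fun i => if h : P i then g ⟨i, h⟩ else 0)]
  have h1 : ∀ x : {x // P x}, (if h : P ↑x then g ⟨↑x, h⟩ else 0) = g x := fun x => dif_pos x.2
  have h2 : ∀ x : {x // ¬ P x}, (if h : P ↑x then g ⟨↑x, h⟩ else 0) = (0:ℚ) := fun x => dif_neg x.2
  rw [Finset.sum_congr rfl (fun x _ => h1 x), Finset.sum_congr rfl (fun x _ => h2 x)]
  simp

theorem farkasQ : ∀ (n : ℕ) {ι : Type} [Fintype ι] (v : ι → Fin n → ℚ) (c : ι → ℚ),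
    (∃ x : Fin n → ℚ, ∀ i, v i ⬝ᵥ x ≤ c i) ∨
    (∃ y : ι → ℚ, (∀ i, 0 ≤ y i) ∧ (∀ j, ∑ i, y i * v i j = 0) ∧ ∑ i, y i * c i < 0) := by
  intro n
  induction n with
  | zero =>
    intro ι _ v c
    by_cases hc : ∀ i, 0 ≤ c i
    · exact Or.inl ⟨0, fun i => by simpa [dotProduct] using hc i⟩
    · right
      push_neg at hc
      obtain ⟨i₀, hi₀⟩ := hc
      classical
      refine ⟨fun j => if j = i₀ then 1 else 0, ?_, ?_, ?_⟩
      · intro i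
        show (0:ℚ) ≤ if i = i₀ then 1 else 0
        split <;> norm_num
      · exact fun j => Fin.elim0 j
      · show ∑ i, (if i = i₀ then (1:ℚ) else 0) * c i < 0
        have h1 : ∀ i : ι, (if i = i₀ then (1:ℚ) else 0) * c i
            = if i = i₀ then c i₀ else 0 := by
          intro i; split <;> simp_all
        rw [Finset.sum_congr rfl fun i _ => h1 i,
          Finset.sum_ite_eq' Finset.univ i₀ (fun _ => c i₀), if_pos (Finset.mem_univ i₀)]
        exact hi₀
  | succ n IH =>
    intro ι _ v c
    classical
    set a : ι → ℚ := fun i => v i 0 with ha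
    set w : ι → Fin n → ℚ := fun i j => v i j.succ with hw
    have hdot : ∀ (i : ι) (x : Fin (n+1) → ℚ),
        v i ⬝ᵥ x = a i * x 0 + w i ⬝ᵥ (fun j => x j.succ) := by
      intro i x
      simp [dotProduct, Fin.sum_univ_succ, ha, hw]
    set Z := {i : ι // a i = 0}
    set P := {i : ι // 0 < a i}
    set N := {i : ι // a i < 0}
    set v' : Z ⊕ P × N → Fin n → ℚ :=
      Sum.elim (fun i => w i.1)
        (fun p => (a p.1.1)⁻¹ • w p.1.1 - (a p.2.1)⁻¹ • w p.2.1) with hv'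
    set c' : Z ⊕ P × N → ℚ :=
      Sum.elim (fun i => c i.1)
        (fun p => (a p.1.1)⁻¹ * c p.1.1 - (a p.2.1)⁻¹ * c p.2.1) with hc'
    rcases IH v' c' with ⟨x', hx'⟩ | ⟨y', hy0, hyv, hyc⟩
    · -- feasible case: choose last coordinate
      left
      set ub : ι → ℚ := fun i => (a i)⁻¹ * (c i - w i ⬝ᵥ x') with hub
      set PF : Finset ι := Finset.univ.filter (fun i => 0 < a i) with hPF
      set NF : Finset ι := Finset.univ.filter (fun i => a i < 0) with hNF
      have hcomb : ∀ (i j : ι), 0 < a i → a j < 0 → ub j ≤ ub i := by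
        intro i j hi hj
        have h0 := hx' (Sum.inr (⟨i, hi⟩, ⟨j, hj⟩))
        simp only [hv', hc', Sum.elim_inr, sub_dotProduct,
          smul_dotProduct, smul_eq_mul] at h0
        have e1 : ub i = (a i)⁻¹ * c i - (a i)⁻¹ * (w i ⬝ᵥ x') := by
          simp only [hub]; ring
        have e2 : ub j = (a j)⁻¹ * c j - (a j)⁻¹ * (w j ⬝ᵥ x') := by
          simp only [hub]; ring
        rw [e1, e2]
        linarith
      set t : ℚ := if hP : PF.Nonempty then PF.inf' hP ub
        else if hN : NF.Nonempty then NF.sup' hN ub else 0 with htdef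
      have fact1 : ∀ i, 0 < a i → t ≤ ub i := by
        intro i hi
        have hiP : i ∈ PF := by simp [hPF, hi]
        have hP : PF.Nonempty := ⟨i, hiP⟩
        rw [htdef, dif_pos hP]
        exact Finset.inf'_le ub hiP
      have fact2 : ∀ j, a j < 0 → ub j ≤ t := by
        intro j hj
        have hjN : j ∈ NF := by simp [hNF, hj]
        by_cases hP : PF.Nonempty
        · obtain ⟨i₀, hi₀mem, hi₀⟩ := Finset.exists_mem_eq_inf' hP ub
          have hi₀pos : 0 < a i₀ := by simpa [hPF] using hi₀mem
          rw [htdef, dif_pos hP, hi₀]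
          exact hcomb i₀ j hi₀pos hj
        · rw [htdef, dif_neg hP, dif_pos ⟨j, hjN⟩]
          exact Finset.le_sup' ub hjN
      refine ⟨Fin.cons t x', fun i => ?_⟩
      have hxx : (fun j : Fin n => (Fin.cons t x' : Fin (n+1) → ℚ) j.succ) = x' := by
        funext j; simp
      rw [hdot i, hxx, Fin.cons_zero]
      rcases lt_trichotomy (a i) 0 with hneg | hzero | hpos
      · have h1 : ub i ≤ t := fact2 i hneg
        have h2 : a i * t ≤ a i * ub i := mul_le_mul_of_nonpos_left h1 (le_of_lt hneg)
        have h3 : a i * ub i = c i - w i ⬝ᵥ x' := by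
          simp only [hub]
          rw [← mul_assoc, mul_inv_cancel₀ (ne_of_lt hneg), one_mul]
        linarith
      · have h0 := hx' (Sum.inl ⟨i, hzero⟩)
        simp only [hv', hc', Sum.elim_inl] at h0
        rw [hzero]; linarith
      · have h1 : t ≤ ub i := fact1 i hpos
        have h2 : a i * t ≤ a i * ub i := mul_le_mul_of_nonneg_left h1 (le_of_lt hpos)
        have h3 : a i * ub i = c i - w i ⬝ᵥ x' := by
          simp only [hub]
          rw [← mul_assoc, mul_inv_cancel₀ (ne_of_gt hpos), one_mul]
        linarith
    · -- certificate case: transfer certificate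
      right
      set y : ι → ℚ := fun i =>
        (if h : a i = 0 then y' (Sum.inl ⟨i, h⟩) else 0)
        + (if h : 0 < a i then (a i)⁻¹ * ∑ q : N, y' (Sum.inr (⟨i, h⟩, q)) else 0)
        + (if h : a i < 0 then (-(a i)⁻¹) * ∑ p : P, y' (Sum.inr (p, ⟨i, h⟩)) else 0) with hy
      have key : ∀ f : ι → ℚ, ∑ i, y i * f i =
          (∑ i : Z, y' (Sum.inl i) * f i.1) +
          ∑ p : P × N, y' (Sum.inr p) * ((a p.1.1)⁻¹ * f p.1.1 - (a p.2.1)⁻¹ * f p.2.1) := by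
        intro f
        have expand : ∀ i, y i * f i =
            (if h : a i = 0 then y' (Sum.inl ⟨i, h⟩) * f i else 0)
            + ((if h : 0 < a i then ∑ q : N, y' (Sum.inr (⟨i, h⟩, q)) * ((a i)⁻¹ * f i) else 0)
            + (if h : a i < 0 then ∑ p : P, y' (Sum.inr (p, ⟨i, h⟩)) * (-((a i)⁻¹ * f i)) else 0)) := by
          intro i
          simp only [hy]
          rcases lt_trichotomy (a i) 0 with hneg | hzero | hpos
          · rw [dif_neg (ne_of_lt hneg), dif_neg (not_lt.mpr (le_of_lt hneg)), dif_pos hneg,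
              dif_neg (ne_of_lt hneg), dif_neg (not_lt.mpr (le_of_lt hneg)), dif_pos hneg,
              ← Finset.sum_mul]
            ring
          · rw [dif_pos hzero, dif_neg (by simp [hzero]), dif_neg (by simp [hzero]),
              dif_pos hzero, dif_neg (by simp [hzero]), dif_neg (by simp [hzero])]
            ring
          · rw [dif_neg (ne_of_gt hpos), dif_pos hpos, dif_neg (not_lt.mpr (le_of_lt hpos)),
              dif_neg (ne_of_gt hpos), dif_pos hpos, dif_neg (not_lt.mpr (le_of_lt hpos)),
              ← Finset.sum_mul]
            ring
        calc ∑ i, y i * f i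
            = (∑ i : ι, if h : a i = 0 then y' (Sum.inl ⟨i, h⟩) * f i else 0)
            + ((∑ i : ι, if h : 0 < a i then ∑ q : N, y' (Sum.inr (⟨i, h⟩, q)) * ((a i)⁻¹ * f i) else 0)
            + (∑ i : ι, if h : a i < 0 then ∑ p : P, y' (Sum.inr (p, ⟨i, h⟩)) * (-((a i)⁻¹ * f i)) else 0)) := by
              rw [← Finset.sum_add_distrib, ← Finset.sum_add_distrib]
              exact Finset.sum_congr rfl fun i _ => expand i
          _ = (∑ i : Z, y' (Sum.inl i) * f i.1)
            + ((∑ p : P, ∑ q : N, y' (Sum.inr (p, q)) * ((a p.1)⁻¹ * f p.1))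
            + (∑ q : N, ∑ p : P, y' (Sum.inr (p, q)) * (-((a q.1)⁻¹ * f q.1)))) := by
              rw [sum_dite_zero (fun i => a i = 0) (fun i => y' (Sum.inl i) * f i.1),
                sum_dite_zero (fun i => 0 < a i)
                  (fun p => ∑ q : N, y' (Sum.inr (p, q)) * ((a p.1)⁻¹ * f p.1)),
                sum_dite_zero (fun i => a i < 0)
                  (fun q => ∑ p : P, y' (Sum.inr (p, q)) * (-((a q.1)⁻¹ * f q.1)))]
          _ = (∑ i : Z, y' (Sum.inl i) * f i.1) +
              ∑ p : P × N, y' (Sum.inr p) * ((a p.1.1)⁻¹ * f p.1.1 - (a p.2.1)⁻¹ * f p.2.1) := by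
              rw [Finset.sum_comm (s := (Finset.univ : Finset N)) (t := (Finset.univ : Finset P))]
              rw [Fintype.sum_prod_type, ← Finset.sum_add_distrib]
              congr 1
              refine Finset.sum_congr rfl fun p _ => ?_
              rw [← Finset.sum_add_distrib]
              refine Finset.sum_congr rfl fun q _ => ?_
              ring
      have ynn : ∀ i, 0 ≤ y i := by
        intro i
        simp only [hy]
        have h1 : 0 ≤ (if h : a i = 0 then y' (Sum.inl ⟨i, h⟩) else 0) := by
          split
          · exact hy0 _
          · exact le_refl 0
        have h2 : 0 ≤ (if h : 0 < a i then (a i)⁻¹ * ∑ q : N, y' (Sum.inr (⟨i, h⟩, q)) else 0) := by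
          split
          case isTrue h =>
            exact mul_nonneg (inv_nonneg.mpr (le_of_lt h))
              (Finset.sum_nonneg fun q _ => hy0 _)
          case isFalse => exact le_refl 0
        have h3 : 0 ≤ (if h : a i < 0 then (-(a i)⁻¹) * ∑ p : P, y' (Sum.inr (p, ⟨i, h⟩)) else 0) := by
          split
          case isTrue h =>
            refine mul_nonneg ?_ (Finset.sum_nonneg fun p _ => hy0 _)
            rw [neg_nonneg]
            exact inv_nonpos.mpr (le_of_lt h)
          case isFalse => exact le_refl 0
        linarith
      refine ⟨y, ynn, ?_, ?_⟩
      · intro k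
        induction k using Fin.cases with
        | zero =>
          rw [key (fun i => v i 0)]
          have hZ : ∀ i : Z, y' (Sum.inl i) * v i.1 0 = 0 := by
            intro i
            have hv0 : v i.1 0 = 0 := i.2
            rw [hv0, mul_zero]
          have hPN : ∀ p : P × N,
              y' (Sum.inr p) * ((a p.1.1)⁻¹ * v p.1.1 0 - (a p.2.1)⁻¹ * v p.2.1 0) = 0 := by
            intro p
            have e1 : (a p.1.1)⁻¹ * v p.1.1 0 = 1 := by
              have hv1 : v p.1.1 0 = a p.1.1 := rfl
              rw [hv1]; exact inv_mul_cancel₀ (ne_of_gt p.1.2)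
            have e2 : (a p.2.1)⁻¹ * v p.2.1 0 = 1 := by
              have hv2 : v p.2.1 0 = a p.2.1 := rfl
              rw [hv2]; exact inv_mul_cancel₀ (ne_of_lt p.2.2)
            rw [e1, e2, sub_self, mul_zero]
          rw [Finset.sum_congr rfl (fun i _ => hZ i), Finset.sum_congr rfl (fun p _ => hPN p)]
          simp
        | succ j =>
          rw [key (fun i => v i j.succ)]
          have h0 := hyv j
          rw [Fintype.sum_sum_type] at h0
          have e1 : ∀ i : Z, y' (Sum.inl i) * v' (Sum.inl i) j = y' (Sum.inl i) * v i.1 j.succ := by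
            intro i; rw [hv']; simp [hw]
          have e2 : ∀ p : P × N, y' (Sum.inr p) * v' (Sum.inr p) j
              = y' (Sum.inr p) * ((a p.1.1)⁻¹ * v p.1.1 j.succ - (a p.2.1)⁻¹ * v p.2.1 j.succ) := by
            intro p; rw [hv']; simp [hw, Pi.sub_apply, Pi.smul_apply, smul_eq_mul]
          rw [Finset.sum_congr rfl (fun i _ => e1 i), Finset.sum_congr rfl (fun p _ => e2 p)] at h0
          exact h0
      · rw [key c]
        have h0 := hyc
        rw [Fintype.sum_sum_type] at h0
        simp only [hc', Sum.elim_inl, Sum.elim_inr] at h0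
        exact h0

lemma swap_sum {m n' : ℕ} (y : Fin m → ℚ) (M : Matrix (Fin m) (Fin n') ℚ) (x : Fin n' → ℚ) :
    ∑ i, y i * (M i ⬝ᵥ x) = ∑ k, (∑ i, y i * M i k) * x k := by
  simp only [dotProduct, Finset.mul_sum, Finset.sum_mul]
  rw [Finset.sum_comm]
  exact Finset.sum_congr rfl fun k _ => Finset.sum_congr rfl fun i _ => by ring




/-- Direction `h ≠ 0` is bounded in the constraint system `A x ≤ b`: there exist
`l, u ∈ ℚ` such that `A x ≤ b` implies `hᵀ x ≤ u` and `−hᵀ x ≤ −l`. -/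
def Bounded {ι : Type} [Fintype ι] {n : ℕ} (A : Matrix ι (Fin n) ℚ) (b : ι → ℚ)
    (h : Fin n → ℚ) : Prop :=
  ∃ l u : ℚ, (∀ x : Fin n → ℚ, A.mulVec x ≤ b → h ⬝ᵥ x ≤ u) ∧
    (∀ x : Fin n → ℚ, A.mulVec x ≤ b → (-h) ⬝ᵥ x ≤ -l)

/-- `(A x ≤ b) ∪ (l ≤ D x ≤ u)` is a split system: all rows are nonzero,
the part `D x ≤ u` is double-bounded, all nonzero directions are unbounded in
`A x ≤ b`, and every row of `A` is unbounded in the combined system. -/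
def SplitSystem {m₁ m₂ n : ℕ} (A : Matrix (Fin m₁) (Fin n) ℚ) (b : Fin m₁ → ℚ)
    (D : Matrix (Fin m₂) (Fin n) ℚ) (u : Fin m₂ → ℚ) : Prop :=
  (∀ i : Fin m₁, A i ≠ 0) ∧ (∀ i : Fin m₂, D i ≠ 0) ∧
  (∃ l : Fin m₂ → ℚ, ∀ x : Fin n → ℚ, D.mulVec x ≤ u → ∀ i : Fin m₂, l i ≤ D.mulVec x i) ∧
  (∀ h : Fin n → ℚ, h ≠ 0 → ¬ Bounded A b h) ∧
  (∀ i : Fin m₁, ¬ Bounded (Matrix.fromRows A D) (Sum.elim b u) (A i))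


theorem rational_extension {m₁ m₂ n : ℕ} (A : Matrix (Fin m₁) (Fin n) ℚ)
    (b : Fin m₁ → ℚ) (D : Matrix (Fin m₂) (Fin n) ℚ) (u : Fin m₂ → ℚ)
    (hsplit : SplitSystem A b D u)
    (s : Fin n → ℚ) (hs : D.mulVec s ≤ u) :
    ∃ s' : Fin n → ℚ, A.mulVec s' ≤ b ∧ D.mulVec s' = D.mulVec s := by
  classical
  obtain ⟨-, -, ⟨l, hl⟩, -, hrows⟩ := hsplit
  by_contra hcon
  push_neg at hcon
  set g : Fin m₂ → ℚ := D.mulVec s with hg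
  set v : (Fin m₁ ⊕ Fin m₂ ⊕ Fin m₂) → Fin n → ℚ :=
    Sum.elim (fun i => A i) (Sum.elim (fun i => D i) (fun i => -(D i))) with hv
  set c : (Fin m₁ ⊕ Fin m₂ ⊕ Fin m₂) → ℚ :=
    Sum.elim b (Sum.elim g (fun i => -(g i))) with hc
  rcases farkasQ n v c with ⟨x, hx⟩ | ⟨y, hy0, hyv, hyc⟩
  · -- feasible: contradiction with hcon
    have hA : A.mulVec x ≤ b := by
      intro i
      have := hx (Sum.inl i)
      simpa [hv, hc, Matrix.mulVec, dotProduct] using this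
    have hD : D.mulVec x = g := by
      funext i
      have h1 := hx (Sum.inr (Sum.inl i))
      have h2 := hx (Sum.inr (Sum.inr i))
      simp only [hv, hc, Sum.elim_inr, Sum.elim_inl, neg_dotProduct] at h1 h2
      have : D.mulVec x i = D i ⬝ᵥ x := rfl
      rw [this]
      linarith
    exact hcon x hA hD
  · -- certificate: contradiction with unboundedness of a row of A
    set y₁ : Fin m₁ → ℚ := fun i => y (Sum.inl i) with hy₁
    set wv : Fin m₂ → ℚ := fun i => y (Sum.inr (Sum.inl i)) - y (Sum.inr (Sum.inr i)) with hwv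
    have hvj : ∀ j, (∑ i, y₁ i * A i j) + (∑ i, wv i * D i j) = 0 := by
      intro j
      have h0 := hyv j
      rw [Fintype.sum_sum_type, Fintype.sum_sum_type] at h0
      simp only [hv, Sum.elim_inl, Sum.elim_inr, Pi.neg_apply, mul_neg,
        Finset.sum_neg_distrib] at h0
      have e1 : ∑ i, y₁ i * A i j = ∑ i, y (Sum.inl i) * A i j :=
        Finset.sum_congr rfl fun i _ => rfl
      have e2 : ∑ i, wv i * D i j
          = (∑ i, y (Sum.inr (Sum.inl i)) * D i j) - ∑ i, y (Sum.inr (Sum.inr i)) * D i j := by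
        rw [← Finset.sum_sub_distrib]
        refine Finset.sum_congr rfl fun i _ => ?_
        show (y (Sum.inr (Sum.inl i)) - y (Sum.inr (Sum.inr i))) * D i j = _
        ring
      rw [e1, e2]
      linarith
    have hfun : ∀ x : Fin n → ℚ,
        (∑ i, y₁ i * (A i ⬝ᵥ x)) + (∑ i, wv i * (D i ⬝ᵥ x)) = 0 := by
      intro x
      rw [swap_sum y₁ A x, swap_sum wv D x, ← Finset.sum_add_distrib]
      apply Finset.sum_eq_zero
      intro k _
      rw [← add_mul, hvj k, zero_mul]
    have hcsum : (∑ i, y₁ i * b i) + (∑ i, wv i * g i) < 0 := by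
      have h0 := hyc
      rw [Fintype.sum_sum_type, Fintype.sum_sum_type] at h0
      simp only [hc, Sum.elim_inl, Sum.elim_inr, mul_neg, Finset.sum_neg_distrib] at h0
      have e1 : ∑ i, y₁ i * b i = ∑ i, y (Sum.inl i) * b i :=
        Finset.sum_congr rfl fun i _ => rfl
      have e2 : ∑ i, wv i * g i
          = (∑ i, y (Sum.inr (Sum.inl i)) * g i) - ∑ i, y (Sum.inr (Sum.inr i)) * g i := by
        rw [← Finset.sum_sub_distrib]
        refine Finset.sum_congr rfl fun i _ => ?_
        show (y (Sum.inr (Sum.inl i)) - y (Sum.inr (Sum.inr i))) * g i = _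
        ring
      rw [e1, e2]
      linarith
    have hgD : ∀ i, g i = D i ⬝ᵥ s := fun i => rfl
    have hws : ∑ i, wv i * g i = - ∑ i, y₁ i * (A i ⬝ᵥ s) := by
      have := hfun s
      have e : ∑ i, wv i * g i = ∑ i, wv i * (D i ⬝ᵥ s) :=
        Finset.sum_congr rfl fun i _ => by rw [hgD i]
      rw [e]; linarith
    -- so ∑ y₁ b < ∑ y₁ (A ⬝ s)
    have hkey : ∑ i, y₁ i * b i < ∑ i, y₁ i * (A i ⬝ᵥ s) := by
      rw [hws] at hcsum; linarith
    -- find k with y₁ k > 0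
    have hexk : ∃ k, 0 < y₁ k := by
      by_contra hno
      push_neg at hno
      have hz : ∀ k, y₁ k = 0 := fun k => le_antisymm (hno k) (hy0 (Sum.inl k))
      have hz1 : ∑ i, y₁ i * b i = 0 :=
        Finset.sum_eq_zero fun i _ => by rw [hz i, zero_mul]
      have hz2 : ∑ i, y₁ i * (A i ⬝ᵥ s) = 0 :=
        Finset.sum_eq_zero fun i _ => by rw [hz i, zero_mul]
      rw [hz1, hz2] at hkey
      exact lt_irrefl 0 hkey
    obtain ⟨k, hk⟩ := hexk
    -- feasibility facts for the combined system
    have hfeas : ∀ x : Fin n → ℚ, (Matrix.fromRows A D).mulVec x ≤ Sum.elim b u →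
        (∀ i, A i ⬝ᵥ x ≤ b i) ∧ (∀ i, l i ≤ D i ⬝ᵥ x) ∧ (∀ i, D i ⬝ᵥ x ≤ u i) := by
      intro x hx
      have hA : ∀ i, A i ⬝ᵥ x ≤ b i := by
        intro i
        have := hx (Sum.inl i)
        exact this
      have hDu : ∀ i, D i ⬝ᵥ x ≤ u i := by
        intro i
        have := hx (Sum.inr i)
        exact this
      have hDl : ∀ i, l i ≤ D i ⬝ᵥ x := fun i => hl x (fun i' => hDu i') i
      exact ⟨hA, hDl, hDu⟩
    set B : ℚ := ∑ i, |wv i| * max |l i| |u i| with hB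
    have hbound : ∀ x : Fin n → ℚ, (∀ i, l i ≤ D i ⬝ᵥ x) → (∀ i, D i ⬝ᵥ x ≤ u i) →
        ∑ i, wv i * (D i ⬝ᵥ x) ≤ B := by
      intro x h1 h2
      refine Finset.sum_le_sum fun i _ => ?_
      have habs : |D i ⬝ᵥ x| ≤ max |l i| |u i| := by
        rw [abs_le]
        constructor
        · have : -(max |l i| |u i|) ≤ l i := by
            have := neg_abs_le (l i)
            have := le_max_left |l i| |u i|
            linarith
          linarith [h1 i]
        · have : u i ≤ max |l i| |u i| := le_trans (le_abs_self _) (le_max_right _ _)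
          linarith [h2 i]
      calc wv i * (D i ⬝ᵥ x) ≤ |wv i * (D i ⬝ᵥ x)| := le_abs_self _
        _ = |wv i| * |D i ⬝ᵥ x| := abs_mul _ _
        _ ≤ |wv i| * max |l i| |u i| := mul_le_mul_of_nonneg_left habs (abs_nonneg _)
    -- now prove Bounded for row k
    apply hrows k
    refine ⟨(-B - ∑ i ∈ Finset.univ.erase k, y₁ i * b i) / y₁ k, b k, ?_, ?_⟩
    · intro x hx
      exact (hfeas x hx).1 k
    · intro x hx
      obtain ⟨hA, hDl, hDu⟩ := hfeas x hx
      rw [neg_dotProduct, neg_le_neg_iff, div_le_iff₀ hk]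
      have h1 : ∑ i, y₁ i * (A i ⬝ᵥ x) ≥ -B := by
        have := hfun x
        have h2 := hbound x hDl hDu
        linarith
      have h2 : ∑ i ∈ Finset.univ.erase k, y₁ i * (A i ⬝ᵥ x)
          ≤ ∑ i ∈ Finset.univ.erase k, y₁ i * b i := by
        refine Finset.sum_le_sum fun i _ => ?_
        exact mul_le_mul_of_nonneg_left (hA i) (hy0 (Sum.inl i))
      have h3 : y₁ k * (A k ⬝ᵥ x) + ∑ i ∈ Finset.univ.erase k, y₁ i * (A i ⬝ᵥ x)
          = ∑ i, y₁ i * (A i ⬝ᵥ x) :=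
        Finset.add_sum_erase Finset.univ (fun i => y₁ i * (A i ⬝ᵥ x)) (Finset.mem_univ k)
      have : -B - ∑ i ∈ Finset.univ.erase k, y₁ i * b i ≤ y₁ k * (A k ⬝ᵥ x) := by
        linarith
      linarith [this, mul_comm (y₁ k) (A k ⬝ᵥ x)]
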